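/- Let G be an (F+1)-robust undirected graph and B a set of vertices with |N(i) ∩ B| ≤ F for every vertex i (F-local model). Then the subgraph induced on V \ B is connected (assuming V \ B is nonempty). -/
import Mathlib


/-- A nonempty vertex subset `Q` of an undirected graph is `r`-reachable if some vertex
in `Q` has at least `r` neighbors outside `Q`. -/
def rReachableU {V : Type*} (G : SimpleGraph V) (r : ℕ) (Q : Set V) : Prop :=
  ∃ i ∈ Q, r ≤ (G.neighborSet i \ Q).ncard

/-- An undirected graph is `r`-robust if for every pair of nonempty disjoint vertex
subsets, at least one of them is `r`-reachable. -/
def rRobustU {V : Type*} (G : SimpleGraph V) (r : ℕ) : Prop :=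
  ∀ Qa Qb : Set V, Qa.Nonempty → Qb.Nonempty → Disjoint Qa Qb →
    rReachableU G r Qa ∨ rReachableU G r Qb

/-- If `G` is `(F+1)`-robust and every vertex has at most `F` neighbors in the
Byzantine set `B` (F-local model), then the subgraph induced on `V \ B` is connected. -/
theorem induced_normal_connected {V : Type*} [Fintype V] (G : SimpleGraph V)
    (F : ℕ) (B : Set V)
    (hrob : rRobustU G (F + 1))
    (hF : ∀ i : V, (G.neighborSet i ∩ B).ncard ≤ F)
    (hA : (Bᶜ : Set V).Nonempty) :
    (G.induce (Bᶜ : Set V)).Connected := by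
  rw [SimpleGraph.connected_iff]
  refine ⟨?_, hA.to_subtype⟩
  intro u v
  by_contra hnr
  set Q : (↥(Bᶜ : Set V)) → Set V := fun w =>
    {x : V | ∃ hx : x ∈ (Bᶜ : Set V), (G.induce (Bᶜ : Set V)).Reachable w ⟨x, hx⟩} with hQ
  have hmem : ∀ w : ↥(Bᶜ : Set V), (w : V) ∈ Q w := fun w =>
    ⟨w.2, SimpleGraph.Reachable.refl _⟩
  have hdisj : Disjoint (Q u) (Q v) := by
    rw [Set.disjoint_left]
    rintro x ⟨hx, hru⟩ ⟨hx', hrv⟩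
    exact hnr (hru.trans hrv.symm)
  have hclosed : ∀ w : ↥(Bᶜ : Set V), ∀ i ∈ Q w,
      (G.neighborSet i \ Q w) ⊆ G.neighborSet i ∩ B := by
    rintro w i ⟨hiB, hri⟩ j ⟨hadj, hjQ⟩
    refine ⟨hadj, ?_⟩
    by_contra hjB
    have hadj' : (G.induce (Bᶜ : Set V)).Adj ⟨i, hiB⟩ ⟨j, hjB⟩ := by
      simpa using hadj
    exact hjQ ⟨hjB, hri.trans hadj'.reachable⟩
  rcases hrob (Q u) (Q v) ⟨u, hmem u⟩ ⟨v, hmem v⟩ hdisj with ⟨i, hi, hcard⟩ | ⟨i, hi, hcard⟩ <;>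
  · have h1 := Set.ncard_le_ncard (hclosed _ i hi) (Set.toFinite _)
    have h2 := hF i
    omega
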